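/- Let n, r be positive integers, ℓ₁,…,ℓ_n rational linear forms on ℝ^r, and q₁,…,q_n ≥ 0 real numbers. Let a = (a₁,…,a_r) ∈ ℝ_{>0}^r be linearly independent over ℚ with ℓ_j(a) + q_j ≥ 0 for all j. Then for any ε > 0 there exists a sequence δ^{(m)} ∈ ℝ_{>0}^r converging to 0 such that for all m and j: ℓ_j(δ^{(m)}) + ε q_j ≥ 0, and δ_i^{(m)} + a_i ∈ ℚ for all i. -/
import Mathlib

open Filter

lemma key_step
    (n r : ℕ)
    (b : Fin n → Fin r → ℚ) (q : Fin n → ℝ) (hq : ∀ j, 0 ≤ q j)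
    (a : Fin r → ℝ) (ha : ∀ i, 0 < a i)
    (hind : LinearIndependent ℚ a)
    (hconstraint : ∀ j, 0 ≤ (∑ i, (b j i : ℝ) * a i) + q j)
    (ε : ℝ) (hε : 0 < ε) (θ : ℝ) (hθ : 0 < θ) :
    ∃ d : Fin r → ℝ,
      (∀ i, 0 < d i) ∧ (∀ i, d i < θ) ∧
      (∀ j, 0 ≤ (∑ i, (b j i : ℝ) * d i) + ε * q j) ∧
      (∀ i, ∃ c : ℚ, d i + a i = (c : ℝ)) := by
  set L : Fin n → ℝ := fun j => ∑ i, (b j i : ℝ) * a i with hLdef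
  set B : Fin n → ℝ := fun j => ∑ i, |(b j i : ℝ)| with hBdef
  have hB0 : ∀ j, 0 ≤ B j := fun j => Finset.sum_nonneg fun i _ => abs_nonneg _
  have hzero : ∀ (g : Fin r → ℚ), (∑ i, (g i : ℝ) * a i) = 0 → ∀ i, g i = 0 := by
    intro g hg
    refine Fintype.linearIndependent_iff.mp hind g ?_
    simpa [Rat.smul_def] using hg
  -- per-j eventual statement
  have hL : ∀ j, ∀ᶠ t in nhdsWithin (0:ℝ) (Set.Ioi 0),
      0 ≤ t * L j - B j * t^2 + ε * q j := by
    intro j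
    rcases (hq j).lt_or_eq with hqj | hqj
    · -- q j > 0
      have hten : Tendsto (fun t : ℝ => t * q j + B j * t^2)
          (nhdsWithin (0:ℝ) (Set.Ioi 0)) (nhds 0) := by
        have : Continuous (fun t : ℝ => t * q j + B j * t^2) := (continuous_id.mul continuous_const).add (continuous_const.mul (continuous_pow 2))
        have h0 := this.tendsto 0
        simp only [zero_mul, mul_zero, zero_pow, zero_add, add_zero, ne_eq,
          OfNat.ofNat_ne_zero, not_false_eq_true] at h0
        exact h0.mono_left nhdsWithin_le_nhds
      have hev := hten.eventually_lt_const (by positivity : (0:ℝ) < ε * q j)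
      filter_upwards [hev, self_mem_nhdsWithin] with t ht ht0
      have ht0' : (0:ℝ) < t := ht0
      have hLj : -q j ≤ L j := by linarith [hconstraint j]
      have : t * (-q j) ≤ t * L j := by
        exact mul_le_mul_of_nonneg_left hLj ht0'.le
      nlinarith
    · -- q j = 0
      have hL0 : 0 ≤ L j := by have := hconstraint j; rw [← hqj] at this; linarith
      rcases hL0.lt_or_eq with hLpos | hLzero
      · have hten : Tendsto (fun t : ℝ => B j * t)
            (nhdsWithin (0:ℝ) (Set.Ioi 0)) (nhds 0) := by
          have : Continuous (fun t : ℝ => B j * t) := continuous_const.mul continuous_id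
          have h0 := this.tendsto 0
          simp only [mul_zero] at h0
          exact h0.mono_left nhdsWithin_le_nhds
        have hev := hten.eventually_lt_const hLpos
        filter_upwards [hev, self_mem_nhdsWithin] with t ht ht0
        have ht0' : (0:ℝ) < t := ht0
        rw [← hqj]
        nlinarith
      · -- L j = 0, so all b j i = 0
        have hb0 : ∀ i, b j i = 0 := by
          apply hzero (b j)
          exact hLzero.symm
        have hBj : B j = 0 := by
          simp only [hBdef]
          apply Finset.sum_eq_zero
          intro i _
          simp [hb0 i]
        filter_upwards with t
        rw [← hqj, ← hLzero, hBj]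
        ring_nf
        norm_num
  have hall : ∀ᶠ t in nhdsWithin (0:ℝ) (Set.Ioi 0),
      (∀ j, 0 ≤ t * L j - B j * t^2 + ε * q j) ∧
      (∀ i, t < a i) ∧ (∀ i, t * a i < θ) ∧ 0 < t := by
    have hA : ∀ᶠ t in nhdsWithin (0:ℝ) (Set.Ioi 0),
        ∀ j, 0 ≤ t * L j - B j * t^2 + ε * q j := eventually_all.mpr hL
    have hB' : ∀ᶠ t in nhdsWithin (0:ℝ) (Set.Ioi 0), ∀ i, t < a i := by
      refine eventually_all.mpr fun i => ?_
      exact eventually_nhdsWithin_of_eventually_nhds (eventually_lt_nhds (ha i))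
    have hC : ∀ᶠ t in nhdsWithin (0:ℝ) (Set.Ioi 0), ∀ i, t * a i < θ := by
      refine eventually_all.mpr fun i => ?_
      have hcont : Continuous (fun t : ℝ => t * a i) := continuous_id.mul continuous_const
      have h0 := hcont.tendsto 0
      simp only [zero_mul] at h0
      exact (h0.mono_left nhdsWithin_le_nhds).eventually_lt_const hθ
    have hD : ∀ᶠ t in nhdsWithin (0:ℝ) (Set.Ioi 0), (0:ℝ) < t := self_mem_nhdsWithin
    filter_upwards [hA, hB', hC, hD] with t h1 h2 h3 h4
    exact ⟨h1, h2, h3, h4⟩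
  obtain ⟨t, h1, h2, h3, ht0⟩ := hall.exists
  have ht2 : (0:ℝ) < t^2 := by positivity
  -- pick rationals
  have hc : ∀ i, ∃ c : ℚ, (1+t) * a i - t^2 < (c:ℝ) ∧ (c:ℝ) < (1+t) * a i := by
    intro i
    exact exists_rat_btwn (by linarith)
  choose c hc1 hc2 using hc
  refine ⟨fun i => (c i : ℝ) - a i, ?_, ?_, ?_, ?_⟩
  · intro i
    show 0 < (c i : ℝ) - a i
    have h1i := hc1 i
    have h2i := h2 i
    nlinarith [mul_pos ht0 (sub_pos.mpr h2i)]
  · intro i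
    show (c i : ℝ) - a i < θ
    have h2i := hc2 i
    have h3i := h3 i
    nlinarith
  · intro j
    have hsum : t * L j - B j * t^2 ≤ ∑ i, (b j i : ℝ) * ((c i : ℝ) - a i) := by
      have : ∀ i ∈ Finset.univ, (b j i : ℝ) * (t * a i) - |(b j i : ℝ)| * t^2
          ≤ (b j i : ℝ) * ((c i : ℝ) - a i) := by
        intro i _
        have hub : (c i : ℝ) - a i ≤ t * a i := by nlinarith [hc2 i]
        have hlb : t * a i - t^2 ≤ (c i : ℝ) - a i := by nlinarith [hc1 i]
        have habs : |((c i : ℝ) - a i) - t * a i| ≤ t^2 := by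
          rw [abs_le]; constructor <;> linarith
        have : -( |(b j i : ℝ)| * t^2) ≤ (b j i : ℝ) * (((c i : ℝ) - a i) - t * a i) := by
          have := abs_mul (b j i : ℝ) (((c i : ℝ) - a i) - t * a i)
          have h1 := neg_abs_le ((b j i : ℝ) * (((c i : ℝ) - a i) - t * a i))
          have h2 : |(b j i : ℝ)| * |((c i : ℝ) - a i) - t * a i| ≤ |(b j i : ℝ)| * t^2 :=
            mul_le_mul_of_nonneg_left habs (abs_nonneg _)
          nlinarith [abs_nonneg ((b j i : ℝ) * (((c i : ℝ) - a i) - t * a i))]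
        nlinarith
      calc t * L j - B j * t^2
          = ∑ i, ((b j i : ℝ) * (t * a i) - |(b j i : ℝ)| * t^2) := by
            rw [Finset.sum_sub_distrib, ← Finset.sum_mul, hLdef, Finset.mul_sum]
            congr 1
            · apply Finset.sum_congr rfl; intro i _; ring
        _ ≤ _ := Finset.sum_le_sum this
    have := h1 j
    linarith
  · intro i
    exact ⟨c i, by ring⟩

theorem rational_approximation_of_linear_constraints
    (n r : ℕ) (hn : 0 < n) (hr : 0 < r)
    (b : Fin n → Fin r → ℚ) (q : Fin n → ℝ) (hq : ∀ j, 0 ≤ q j)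
    (a : Fin r → ℝ) (ha : ∀ i, 0 < a i)
    (hind : LinearIndependent ℚ a)
    (hconstraint : ∀ j, 0 ≤ (∑ i, (b j i : ℝ) * a i) + q j)
    (ε : ℝ) (hε : 0 < ε) :
    ∃ δ : ℕ → Fin r → ℝ,
      (∀ m i, 0 < δ m i) ∧
      Filter.Tendsto δ Filter.atTop (nhds 0) ∧
      (∀ m j, 0 ≤ (∑ i, (b j i : ℝ) * δ m i) + ε * q j) ∧
      (∀ m i, ∃ c : ℚ, δ m i + a i = (c : ℝ)) := by
  have h : ∀ m : ℕ, ∃ d : Fin r → ℝ,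
      (∀ i, 0 < d i) ∧ (∀ i, d i < 1 / (m + 1)) ∧
      (∀ j, 0 ≤ (∑ i, (b j i : ℝ) * d i) + ε * q j) ∧
      (∀ i, ∃ c : ℚ, d i + a i = (c : ℝ)) := by
    intro m
    exact key_step n r b q hq a ha hind hconstraint ε hε (1 / (m + 1)) (by positivity)
  choose δ hpos hsmall hcon hrat using h
  refine ⟨δ, hpos, ?_, hcon, hrat⟩
  rw [tendsto_pi_nhds]
  intro i
  have : Tendsto (fun m : ℕ => 1 / ((m : ℝ) + 1)) atTop (nhds 0) :=
    tendsto_one_div_add_atTop_nhds_zero_nat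
  refine squeeze_zero (fun m => (hpos m i).le) (fun m => (hsmall m i).le) this
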